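/- arXiv:2510.03281 — 3 statements merged into one kernel-verified Lean document; each statement's English description precedes it below -/
import Mathlib

section
/- For d ≥ 3, with π(s) = (d-1)/(C(d,s)·s·(d-s)), the identity 2·Σ_{s=1}^{d-1} π(s)·C(d-3, s-1) = (d-1)/d holds, where C(n,k) = 0 whenever k < 0 or k > n. -/
/-- The Shapley kernel weight `π(s) = (d-1)/(C(d,s)·s·(d-s))`. -/
noncomputable def shapleyKernel (d s : ℕ) : ℝ :=
  ((d : ℝ) - 1) / ((d.choose s : ℝ) * (s : ℝ) * ((d : ℝ) - (s : ℝ)))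

/-- Binomial coefficient with the convention `C(n,k) = 0` for `k < 0` or `k > n`. -/
noncomputable def binom (n : ℕ) (k : ℤ) : ℝ :=
  if k < 0 then 0 else (n.choose k.toNat : ℝ)

lemma kernel_sum_a_nat_id (m t : ℕ) :
    (m+1-t) * ((m+3).choose (t+1) * (t+1) * (m+2-t)) =
      (m+2) * (Nat.choose m t) * ((m+3) * (m+1)) := by
  have h1 := Nat.add_one_mul_choose_eq (m+2) t
  have h2 := Nat.choose_mul_succ_eq (m+1) t
  have h3 := Nat.choose_mul_succ_eq m t
  calc (m+1-t) * ((m+3).choose (t+1) * (t+1) * (m+2-t))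
      = (m+1-t) * (((m+3) * (m+2).choose t) * (m+2-t)) := by rw [h1]
    _ = (m+3) * (m+1-t) * ((m+2).choose t * (m+2-t)) := by ring
    _ = (m+3) * (m+1-t) * ((m+1).choose t * (m+2)) := by rw [← h2]
    _ = (m+3) * (m+2) * ((m+1).choose t * (m+1-t)) := by ring
    _ = (m+3) * (m+2) * (m.choose t * (m+1)) := by rw [← h3]
    _ = (m+2) * (Nat.choose m t) * ((m+3) * (m+1)) := by ring

lemma kernel_sum_a_term_eq (m t : ℕ) (ht : t ≤ m + 1) :
    shapleyKernel (m+3) (t+1) * binom m ((t+1 : ℕ) - 1 : ℤ) =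
      (((m:ℝ) + 1 - t)) / (((m:ℝ)+3) * ((m:ℝ)+1)) := by
  have hb : binom m ((t+1 : ℕ) - 1 : ℤ) = (m.choose t : ℝ) := by
    simp [binom]
  rw [hb]
  unfold shapleyKernel
  have hc : ((m+3).choose (t+1) : ℝ) ≠ 0 := by
    exact_mod_cast (Nat.choose_pos (by omega : t+1 ≤ m+3)).ne'
  have hds : ((m+3 : ℕ) : ℝ) - ((t+1 : ℕ) : ℝ) ≠ 0 := by
    push_cast; intro h; have : (t:ℝ) = (m:ℝ) + 2 := by linarith
    exact absurd (by exact_mod_cast this) (by omega)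
  have hA : ((m+3).choose (t+1) : ℝ) * ((t+1:ℕ) : ℝ) * (((m+3:ℕ):ℝ) - ((t+1:ℕ):ℝ)) ≠ 0 := by
    apply mul_ne_zero (mul_ne_zero hc (by push_cast; positivity)) hds
  have hB : ((m:ℝ)+3) * ((m:ℝ)+1) ≠ 0 := by positivity
  have hR := congrArg (Nat.cast : ℕ → ℝ) (kernel_sum_a_nat_id m t)
  push_cast [Nat.cast_sub ht, Nat.cast_sub (show t ≤ m+2 by omega)] at hR
  rw [div_mul_eq_mul_div, div_eq_div_iff hA hB]
  push_cast
  linear_combination -hR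

lemma kernel_sum_a_gauss (n : ℕ) : ∑ x ∈ Finset.Icc 1 n, (x:ℝ) = n*(n+1)/2 := by
  induction n with
  | zero => simp
  | succ n ih =>
    rw [Finset.sum_Icc_succ_top (by omega), ih]; push_cast; ring

theorem kernel_sum_a (d : ℕ) (hd : 3 ≤ d) :
    2 * ∑ s ∈ Finset.Icc 1 (d - 1), shapleyKernel d s * binom (d - 3) ((s : ℤ) - 1) =
      ((d : ℝ) - 1) / d := by
  obtain ⟨m, rfl⟩ : ∃ m, d = m + 3 := ⟨d - 3, by omega⟩
  have hsum : ∀ s ∈ Finset.Icc 1 (m + 3 - 1),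
      shapleyKernel (m+3) s * binom (m + 3 - 3) ((s : ℤ) - 1) =
        (((m:ℝ) + 2 - s)) / (((m:ℝ)+3) * ((m:ℝ)+1)) := by
    intro s hs
    simp only [Finset.mem_Icc] at hs
    obtain ⟨t, rfl⟩ : ∃ t, s = t + 1 := ⟨s - 1, by omega⟩
    have ht : t ≤ m + 1 := by omega
    have h := kernel_sum_a_term_eq m t ht
    simp only [show m + 3 - 3 = m from rfl]
    rw [show ((t+1 : ℕ) : ℤ) - 1 = ((t+1 : ℕ) - 1 : ℤ) by push_cast; ring]
    rw [h]
    push_cast; ring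
  rw [Finset.sum_congr rfl hsum, ← Finset.sum_div]
  have hs2 : ∑ x ∈ Finset.Icc 1 (m+3-1), ((m:ℝ)+2-x) = ((m:ℝ)+2)*((m:ℝ)+1)/2 := by
    rw [Finset.sum_sub_distrib, Finset.sum_const, kernel_sum_a_gauss]
    simp [Nat.card_Icc]
    ring
  rw [hs2]
  have h1 : ((m:ℝ)+3) ≠ 0 := by positivity
  have h2 : ((m:ℝ)+1) ≠ 0 := by positivity
  push_cast
  field_simp
  ring
end

section
/- For d ≥ 3, with π(s) = (d-1)/(C(d,s)·s·(d-s)), the identity 2·Σ_{s=1}^{d-1} π(s)·C(d-3, s-2) = (d-1)/d holds, where C(n,k) = 0 whenever k < 0 or k > n. -/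
lemma natkey (t u : ℕ) :
    (t+u+2) * ((t+u).choose t) * ((t+u+3)*(t+u+1))
      = (t+1) * ((t+u+3).choose (t+2) * (t+2) * (u+1)) := by
  have h1 : (t+u+3).choose (t+2) * (t+2) = (t+u+3) * (t+u+2).choose (t+1) := by
    rw [← Nat.add_one_mul_choose_eq]
  have h2 : (t+u+2).choose (t+1) * (t+1) = (t+u+2) * (t+u+1).choose t := by
    rw [← Nat.add_one_mul_choose_eq]
  have h3 : (t+u+1).choose (t+1) * (t+1) = (t+u+1).choose t * (t+u+1-t) := by
    rw [Nat.choose_succ_right_eq]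
  have h4 : (t+u+1).choose (t+1) * (t+1) = (t+u+1) * (t+u).choose t := by
    rw [← Nat.add_one_mul_choose_eq]
  have h5 : t+u+1-t = u+1 := by omega
  rw [h5] at h3
  calc (t+u+2) * ((t+u).choose t) * ((t+u+3)*(t+u+1))
      = (t+u+3) * ((t+u+2) * ((t+u+1) * (t+u).choose t)) := by ring
    _ = (t+u+3) * ((t+u+2) * ((t+u+1).choose (t+1) * (t+1))) := by rw [h4]
    _ = (t+u+3) * ((t+u+2) * (t+u+1).choose (t+1)) * (t+1) := by ring
    _ = (t+1) * ((t+u+3).choose (t+2) * (t+2) * (u+1)) := by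
        rw [show (t+u+2) * (t+u+1).choose (t+1) = (t+u+2).choose (t+1+1) * (t+1+1) from
              Nat.add_one_mul_choose_eq _ _]
        rw [show (t+u+2).choose (t+1+1) * (t+1+1) = (t+u+2).choose (t+1) * (t+u+2-(t+1)) from
              Nat.choose_succ_right_eq _ _]
        rw [show t+u+2-(t+1) = u+1 by omega]
        rw [h1]
        ring

lemma key (t u : ℕ) :
    shapleyKernel (t+u+3) (t+2) * binom (t+u) t
      = ((t:ℝ)+1)/(((t:ℝ)+(u:ℝ)+3)*(((t:ℝ)+(u:ℝ)+3)-2)) := by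
  unfold shapleyKernel binom
  rw [if_neg (by omega : ¬ ((t:ℤ) < 0))]
  simp only [Int.toNat_natCast]
  rw [div_mul_eq_mul_div]
  have hc1 : (0:ℝ) < ((t+u+3).choose (t+2) : ℝ) := by
    exact_mod_cast Nat.choose_pos (by omega)
  have hden : (0:ℝ) < ((t+u+3).choose (t+2) : ℝ) * ((t+2:ℕ):ℝ) * (((t+u+3:ℕ):ℝ) - ((t+2:ℕ):ℝ)) := by
    push_cast
    have h2 : (0:ℝ) < (t:ℝ) + 2 := by positivity
    have h3 : (0:ℝ) < (t:ℝ) + (u:ℝ) + 3 - ((t:ℝ) + 2) := by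
      have : (0:ℝ) ≤ (u:ℝ) := Nat.cast_nonneg u
      linarith
    exact mul_pos (mul_pos hc1 h2) h3
  have hden2 : (0:ℝ) < ((t:ℝ)+(u:ℝ)+3)*(((t:ℝ)+(u:ℝ)+3)-2) := by nlinarith
  rw [div_eq_div_iff (ne_of_gt hden) (ne_of_gt hden2)]
  have hnk := natkey t u
  have : ((t+u+2) * ((t+u).choose t) * ((t+u+3)*(t+u+1)) : ℝ)
      = ((t+1) * ((t+u+3).choose (t+2) * (t+2) * (u+1)) : ℝ) := by exact_mod_cast congrArg (Nat.cast (R := ℝ)) hnk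
  push_cast at this ⊢
  nlinarith [this]

lemma gauss (m : ℕ) : (∑ s ∈ Finset.Icc 1 m, ((s:ℝ)-1)) * 2 = (m:ℝ) * ((m:ℝ)-1) := by
  induction m with
  | zero => simp
  | succ n ih =>
    rw [Finset.sum_Icc_succ_top (by omega), add_mul, ih]
    push_cast
    ring

theorem kernel_sum_b (d : ℕ) (hd : 3 ≤ d) :
    2 * ∑ s ∈ Finset.Icc 1 (d - 1), shapleyKernel d s * binom (d - 3) ((s : ℤ) - 2) =
      ((d : ℝ) - 1) / d := by
  have hsum : ∑ s ∈ Finset.Icc 1 (d - 1), shapleyKernel d s * binom (d - 3) ((s : ℤ) - 2)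
      = ∑ s ∈ Finset.Icc 1 (d - 1), ((s:ℝ)-1)/((d:ℝ)*((d:ℝ)-2)) := by
    apply Finset.sum_congr rfl
    intro s hs
    simp only [Finset.mem_Icc] at hs
    rcases Nat.lt_or_ge s 2 with h1 | h2
    · have : s = 1 := by omega
      subst this
      simp [binom, shapleyKernel]
    · obtain ⟨t, rfl⟩ : ∃ t, s = t + 2 := ⟨s - 2, by omega⟩
      obtain ⟨u, rfl⟩ : ∃ u, d = t + u + 3 := ⟨d - t - 3, by omega⟩
      have h3 : t + u + 3 - 3 = t + u := by omega
      have h4 : ((t+2 : ℕ) : ℤ) - 2 = (t : ℤ) := by push_cast; ring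
      rw [h3, h4, key]
      push_cast
      ring
  rw [hsum, ← Finset.sum_div]
  have hg := gauss (d - 1)
  have hd1 : ((d - 1 : ℕ) : ℝ) = (d : ℝ) - 1 := by
    have : (1:ℕ) ≤ d := by omega
    push_cast [this]; ring
  rw [hd1] at hg
  set S := ∑ s ∈ Finset.Icc 1 (d - 1), ((s:ℝ)-1) with hS
  have hd0 : (d : ℝ) ≠ 0 := by
    have : (0:ℝ) < d := by exact_mod_cast (show 0 < d by omega)
    positivity
  have hd2 : (d : ℝ) - 2 ≠ 0 := by
    have : (3:ℝ) ≤ d := by exact_mod_cast hd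
    nlinarith
  have hS' : S = ((d:ℝ)-1)*((d:ℝ)-2)/2 := by linarith
  rw [hS']
  field_simp
end

section
/- For d ≥ 2 and any fixed i ∈ {1,...,d-1}, Σ_{z ∈ {0,1}^d, z ≠ 1, z_d = 1} [ (d/(d-1))·(z_i - 1) + (1/(d-1))·(d - |z|) ] · π(d - |z|) = -1/d, where |z| is the number of ones in z, 1 is the all-ones vector, and π(s) = (d-1)/(C(d,s)·s·(d-s)). -/
open Finset

/-- The 0-1 indicator vector of a subset `S ⊆ [d]` (the binary vector `z`). -/
def indicatorVec {d : ℕ} (S : Finset (Fin d)) : Fin d → ℝ :=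
  fun i => if i ∈ S then 1 else 0

theorem sum_last_coord_one (d : ℕ) (hd : 2 ≤ d) (i : Fin d) (hi : (i : ℕ) < d - 1) :
    ∑ S ∈ univ.powerset.filter
        (fun S : Finset (Fin d) => S ≠ univ ∧ (⟨d - 1, by omega⟩ : Fin d) ∈ S),
      (((d : ℝ) / ((d : ℝ) - 1)) * (indicatorVec S i - 1) +
          (1 / ((d : ℝ) - 1)) * ((d : ℝ) - S.card)) * shapleyKernel d (d - S.card) =
      -(1 / (d : ℝ)) := by
  have hdR : (2:ℝ) ≤ (d:ℝ) := by exact_mod_cast hd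
  set ℓ : Fin d := ⟨d - 1, by omega⟩ with hℓ
  have hiℓ : i ≠ ℓ := by
    intro h
    rw [h] at hi
    simp [hℓ] at hi
  -- summand as function of the complement
  set G : Finset (Fin d) → ℝ := fun T =>
    (((d : ℝ) / ((d : ℝ) - 1)) * ((if i ∈ T then 0 else 1) - 1) +
      (1 / ((d : ℝ) - 1)) * (T.card : ℝ)) * shapleyKernel d T.card with hG
  -- Step 1: change variables S ↦ Sᶜ
  have step1 : ∑ S ∈ univ.powerset.filter
        (fun S : Finset (Fin d) => S ≠ univ ∧ ℓ ∈ S),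
      (((d : ℝ) / ((d : ℝ) - 1)) * (indicatorVec S i - 1) +
          (1 / ((d : ℝ) - 1)) * ((d : ℝ) - S.card)) * shapleyKernel d (d - S.card) =
      ∑ T ∈ univ.powerset.filter (fun T : Finset (Fin d) => T ≠ ∅ ∧ ℓ ∉ T), G T := by
    refine Finset.sum_bij' (fun S _ => Sᶜ) (fun T _ => Tᶜ) ?_ ?_ ?_ ?_ ?_
    · intro S hS
      simp only [mem_filter, mem_powerset] at hS ⊢
      refine ⟨subset_univ _, ?_, ?_⟩
      · simpa using hS.2.1
      · simpa using hS.2.2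
    · intro T hT
      simp only [mem_filter, mem_powerset] at hT ⊢
      refine ⟨subset_univ _, ?_, ?_⟩
      · simpa [Finset.compl_eq_univ_iff] using hT.2.1
      · simpa using hT.2.2
    · intro S _; simp
    · intro T _; simp
    · intro S hS
      simp only [mem_filter, mem_powerset] at hS
      have hcard : S.card ≤ d := by
        simpa using Finset.card_le_card (subset_univ S)
      have h1 : (Sᶜ).card = d - S.card := by
        simp [Finset.card_compl]
      have h2 : ((d - S.card : ℕ) : ℝ) = (d : ℝ) - S.card := by
        push_cast [Nat.cast_sub hcard]; ring
      have h3 : (if i ∈ Sᶜ then (0:ℝ) else 1) = indicatorVec S i := by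
        by_cases h : i ∈ S <;> simp [indicatorVec, h]
      rw [hG]
      simp only [h1, h2, h3]
  rw [step1]
  -- Step 2: rewrite index set as powerset of E := univ.erase ℓ, and drop ∅
  have hBset : univ.powerset.filter (fun T : Finset (Fin d) => T ≠ ∅ ∧ ℓ ∉ T) =
      ((univ.erase ℓ).powerset).erase ∅ := by
    ext T
    simp only [mem_filter, mem_powerset, mem_erase, Finset.subset_erase]
    constructor
    · rintro ⟨h1, h2, h3⟩; exact ⟨h2, h1, h3⟩
    · rintro ⟨h1, h2, h3⟩; exact ⟨h2, h1, h3⟩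
  rw [hBset]
  have hGempty : G ∅ = 0 := by
    simp [hG]
  rw [Finset.sum_erase _ hGempty]
  -- Step 3: split off element i
  have hiE : i ∈ univ.erase ℓ := by simp [hiℓ]
  have hEins : univ.erase ℓ = insert i ((univ.erase ℓ).erase i) := by
    rw [Finset.insert_erase hiE]
  rw [hEins, Finset.sum_powerset_insert (by simp) G, ← Finset.sum_add_distrib]
  set P : Finset (Fin d) := (univ.erase ℓ).erase i with hP
  have hPcard : P.card = d - 2 := by
    rw [hP, Finset.card_erase_of_mem hiE, Finset.card_erase_of_mem (mem_univ ℓ),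
      Finset.card_univ, Fintype.card_fin]
    omega
  have hdne : (d:ℝ) ≠ 0 := by linarith
  have hd1 : (d:ℝ) - 1 ≠ 0 := by linarith
  -- Step 4: each term is -1/d at ∅ and 0 elsewhere
  have key : ∀ t ∈ P.powerset, G t + G (insert i t) =
      if t = ∅ then -(1 / (d : ℝ)) else 0 := by
    intro t ht
    rw [mem_powerset] at ht
    have hit : i ∉ t := fun h => (Finset.mem_erase.1 (ht h)).1 rfl
    have htcard : t.card ≤ d - 2 := hPcard ▸ Finset.card_le_card ht
    by_cases h0 : t = ∅
    · subst h0
      rw [if_pos rfl, hGempty, zero_add, hG]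
      simp only [Finset.card_insert_of_notMem (Finset.notMem_empty i),
        Finset.card_empty, Finset.mem_insert, true_or, if_pos, zero_add,
        Nat.cast_one, shapleyKernel, Nat.choose_one_right]
      field_simp
      ring
    · rw [if_neg h0]
      obtain ⟨k, hk⟩ : ∃ k, t.card = k := ⟨_, rfl⟩
      have hk1 : 1 ≤ k := hk ▸ Finset.card_pos.2 (Finset.nonempty_of_ne_empty h0)
      have hkd : k ≤ d - 2 := hk ▸ htcard
      have hkdlt : k < d := by omega
      have hcardins : (insert i t).card = k + 1 := by
        rw [Finset.card_insert_of_notMem hit, hk]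
      have hbin : (d.choose (k+1) : ℝ) * ((k:ℝ) + 1) = (d.choose k : ℝ) * ((d:ℝ) - k) := by
        have h := Nat.choose_succ_right_eq d k
        have hcast : ((d.choose (k+1) : ℕ) : ℝ) * ((k:ℝ)+1) = ((d.choose k : ℕ) : ℝ) * (((d - k : ℕ)) : ℝ) := by
          exact_mod_cast congrArg (fun n : ℕ => (n : ℝ)) h
        rwa [Nat.cast_sub hkdlt.le] at hcast
      have hc1 : (d.choose k : ℝ) ≠ 0 := by
        have : 0 < d.choose k := Nat.choose_pos hkdlt.le
        positivity
      have hk1' : (k:ℝ) + 1 ≠ 0 := by positivity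
      have hkne : (k:ℝ) ≠ 0 := by
        have : (0:ℝ) < k := by exact_mod_cast hk1
        linarith
      have hdk : (d:ℝ) - (k:ℝ) ≠ 0 := by
        have : (k:ℝ) < d := by exact_mod_cast hkdlt
        linarith
      have hdk1 : (d:ℝ) - ((k:ℝ)+1) ≠ 0 := by
        have : (k:ℝ) + 1 < d := by
          have : k + 1 < d := by omega
          exact_mod_cast this
        linarith
      have hc2 : (d.choose (k+1) : ℝ) = (d.choose k : ℝ) * ((d:ℝ) - k) / ((k:ℝ)+1) := by
        field_simp
        linarith [hbin]
      rw [hG]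
      simp only [hcardins, hk, if_neg hit, if_pos (Finset.mem_insert_self i t),
        shapleyKernel, hc2]
      push_cast
      field_simp
      ring
  rw [Finset.sum_congr rfl key, Finset.sum_ite_eq' P.powerset ∅ (fun _ => -(1/(d:ℝ)))]
  simp
end
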